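/- Every completely regular space X admits a base satisfying Frink's conditions: the cozero sets of continuous functions X → [0,1] form a base B such that (1) for every open U and x ∈ U there exists V ∈ B with x ∈ X \ V ⊆ U, and (2) for all U, V ∈ B with U ∪ V = X there exist U*, V* ∈ B with X \ V ⊆ U* ⊆ X \ V* ⊆ U. -/

import Mathlib

/-- The family of cozero sets of continuous functions `X → [0,1]`. -/
def cozeroSets (X : Type*) [TopologicalSpace X] : Set (Set X) :=
  {s | ∃ f : X → ℝ, Continuous f ∧ (∀ x, f x ∈ Set.Icc (0 : ℝ) 1) ∧
    s = f ⁻¹' Set.Ioc (0 : ℝ) 1}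

lemma cozero_eq_pos {X : Type*} (f : X → ℝ) (hf : ∀ x, f x ∈ Set.Icc (0 : ℝ) 1) :
    f ⁻¹' Set.Ioc (0 : ℝ) 1 = {y | 0 < f y} := by
  ext y
  simp only [Set.mem_preimage, Set.mem_Ioc, Set.mem_setOf_eq]
  exact ⟨fun h => h.1, fun h => ⟨h, (hf y).2⟩⟩

lemma mem_cozero {X : Type*} [TopologicalSpace X] (f : X → ℝ) (hc : Continuous f)
    (hf : ∀ x, f x ∈ Set.Icc (0 : ℝ) 1) : {y | 0 < f y} ∈ cozeroSets X :=
  ⟨f, hc, hf, (cozero_eq_pos f hf).symm⟩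

/-- From complete regularity: a real-valued separating function. -/
lemma sep_fun {X : Type*} [TopologicalSpace X] [CompletelyRegularSpace X]
    {x : X} {U : Set X} (hU : IsOpen U) (hx : x ∈ U) :
    ∃ f : X → ℝ, Continuous f ∧ (∀ y, f y ∈ Set.Icc (0 : ℝ) 1) ∧
      f x = 1 ∧ ∀ y ∉ U, f y = 0 := by
  obtain ⟨g, cg, hgx, hgK⟩ := CompletelyRegularSpace.completely_regular x Uᶜ
    hU.isClosed_compl (by simpa using hx)
  refine ⟨fun y => 1 - (g y : ℝ), by continuity, fun y => ?_, ?_, fun y hy => ?_⟩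
  · have := (g y).2
    simp only [Set.mem_Icc] at this ⊢
    constructor <;> linarith [this.1, this.2]
  · simp [hgx]
  · have : g y = 1 := hgK (by simpa using hy)
    simp [this]

theorem frink_necessary {X : Type*} [TopologicalSpace X] [T1Space X]
    [CompletelyRegularSpace X] :
    TopologicalSpace.IsTopologicalBasis (cozeroSets X) ∧
    (∀ U : Set X, IsOpen U → ∀ x ∈ U, ∃ V ∈ cozeroSets X, x ∈ Vᶜ ∧ Vᶜ ⊆ U) ∧
    (∀ U ∈ cozeroSets X, ∀ V ∈ cozeroSets X, U ∪ V = Set.univ →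
      ∃ U' ∈ cozeroSets X, ∃ V' ∈ cozeroSets X, Vᶜ ⊆ U' ∧ U' ⊆ V'ᶜ ∧ V'ᶜ ⊆ U) := by
  have openCoz : ∀ s ∈ cozeroSets X, IsOpen s := by
    rintro s ⟨f, cf, hf, rfl⟩
    rw [cozero_eq_pos f hf]
    exact isOpen_lt continuous_const cf
  refine ⟨?_, ?_, ?_⟩
  · apply TopologicalSpace.isTopologicalBasis_of_isOpen_of_nhds openCoz
    intro x U hx hU
    obtain ⟨f, cf, hf, hfx, hf0⟩ := sep_fun hU hx
    refine ⟨{y | 0 < f y}, mem_cozero f cf hf, by simp [hfx], fun y hy => ?_⟩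
    by_contra h
    simp [hf0 y h] at hy
  · intro U hU x hx
    obtain ⟨f, cf, hf, hfx, hf0⟩ := sep_fun hU hx
    refine ⟨{y | 0 < (1 - f y)}, mem_cozero _ (by continuity)
      (fun y => by have := hf y; simp only [Set.mem_Icc] at this ⊢; constructor <;> linarith [this.1, this.2]),
      ?_, fun y hy => ?_⟩
    · simp [hfx]
    · by_contra h
      have := hf0 y h
      simp [this] at hy
  · rintro U ⟨f, cf, hf, rfl⟩ V ⟨g, cg, hg, rfl⟩ hUV
    rw [cozero_eq_pos f hf] at hUV ⊢
    rw [cozero_eq_pos g hg] at hUV ⊢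
    have hpos : ∀ y, 0 < f y + g y := by
      intro y
      have : y ∈ {y | 0 < f y} ∪ {y | 0 < g y} := hUV ▸ Set.mem_univ y
      rcases this with h | h <;> [skip; skip] <;>
        · simp only [Set.mem_setOf_eq] at h
          nlinarith [(hf y).1, (hg y).1]
    set h : X → ℝ := fun y => f y / (f y + g y) with hh
    have ch : Continuous h := cf.div (cf.add cg) fun y => (hpos y).ne'
    have hIcc : ∀ y, h y ∈ Set.Icc (0 : ℝ) 1 := by
      intro y
      constructor
      · exact div_nonneg (hf y).1 (hpos y).le
      · rw [div_le_one (hpos y)]; linarith [(hg y).1]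
    set u : X → ℝ := fun y => max 0 (min 1 (2 * h y - 1)) with hu
    set v : X → ℝ := fun y => max 0 (min 1 (1 - 2 * h y)) with hv
    have cu : Continuous u := by fun_prop
    have cv : Continuous v := by fun_prop
    have hui : ∀ y, u y ∈ Set.Icc (0 : ℝ) 1 := fun y =>
      ⟨le_max_left _ _, max_le zero_le_one (min_le_left _ _)⟩
    have hvi : ∀ y, v y ∈ Set.Icc (0 : ℝ) 1 := fun y =>
      ⟨le_max_left _ _, max_le zero_le_one (min_le_left _ _)⟩
    have hupos : ∀ y, 0 < u y ↔ 1 / 2 < h y := by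
      intro y
      simp only [hu, lt_max_iff, lt_min_iff]
      constructor
      · rintro (h1 | ⟨_, h2⟩); · linarith
        · linarith
      · intro h1; right; exact ⟨one_pos, by linarith⟩
    have hvpos : ∀ y, 0 < v y ↔ h y < 1 / 2 := by
      intro y
      simp only [hv, lt_max_iff, lt_min_iff]
      constructor
      · rintro (h1 | ⟨_, h2⟩); · linarith
        · linarith
      · intro h1; right; exact ⟨one_pos, by linarith⟩
    refine ⟨{y | 0 < u y}, mem_cozero u cu hui, {y | 0 < v y}, mem_cozero v cv hvi,
      fun y hy => ?_, fun y hy => ?_, fun y hy => ?_⟩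
    · -- g y = 0, so h y = 1 > 1/2
      simp only [Set.mem_compl_iff, Set.mem_setOf_eq, not_lt] at hy
      have hg0 : g y = 0 := le_antisymm hy (hg y).1
      have hfy : 0 < f y := by have := hpos y; linarith
      have : h y = 1 := by rw [hh]; field_simp [hg0]; rw [hg0, add_zero]
      simp only [Set.mem_setOf_eq, hupos]
      rw [this]; norm_num
    · simp only [Set.mem_setOf_eq, hupos] at hy
      simp only [Set.mem_compl_iff, Set.mem_setOf_eq, hvpos, not_lt]
      linarith
    · simp only [Set.mem_compl_iff, Set.mem_setOf_eq, hvpos, not_lt] at hy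
      simp only [Set.mem_setOf_eq]
      have := hpos y
      have hfg : f y = h y * (f y + g y) := by rw [hh]; field_simp
      nlinarith [(hg y).1]
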